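/- Let G be a weighted directed graph on vertex set {1,…,N} with Laplacian L, suppose G has a rooted-out branch, and consider the dynamics q̇(t) = −(L ⊗ I_n) q(t) on ℝ^{nN} with solution q(t) = exp(−t(L ⊗ I_n)) q(0). Then the following are equivalent: (i) there exists a NONZERO point q^∞ in the consensus set E = {x ∈ ℝ^{nN} : x_1 = ⋯ = x_N} such that q(t) converges exponentially to q^∞ (i.e., there are η, λ > 0 with ‖q(t) − q^∞‖ ≤ η e^{−λ t} ‖q(0) − q^∞‖ for all t ≥ 0); (ii) the initial value q(0) does not lie in the column space of the matrix L ⊗ I_n. -/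

import Mathlib

open scoped Kronecker

/-- The Laplacian of the weighted directed graph on `Fin N` with weights `a`. -/
def graphLaplacian {N : ℕ} (a : Fin N → Fin N → ℝ) : Matrix (Fin N) (Fin N) ℝ :=
  Matrix.of fun i j => if i = j then ∑ k ∈ Finset.univ.erase i, a i k else -(a i j)

/-- `G` has a rooted-out branch: some vertex has a directed path to every other vertex
(information flows from `j` to `i` along an edge when `a i j > 0`). -/
def hasRootedOutBranch {N : ℕ} (a : Fin N → Fin N → ℝ) : Prop :=
  ∃ r : Fin N, ∀ v : Fin N, Relation.ReflTransGen (fun u v => 0 < a v u) r v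

/-- The Euclidean norm on `ℝ^m`. -/
noncomputable def euclidNorm {m : Type*} [Fintype m] (v : m → ℝ) : ℝ :=
  Real.sqrt (∑ i, v i ^ 2)

namespace ConsensusProofAux

open NormedSpace

/-! ### Generic matrix exponential lemmas -/

section MatrixExp

variable {m : Type*} [Fintype m] [DecidableEq m]

attribute [local instance] Matrix.linftyOpSemiNormedRing Matrix.linftyOpNormedRing
  Matrix.linftyOpNormedAlgebra

/-- entry evaluation as a continuous linear map -/
noncomputable def entryCLM (i j : m) : Matrix m m ℝ →L[ℝ] ℝ :=
  LinearMap.toContinuousLinearMap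
    { toFun := fun A => A i j
      map_add' := fun _ _ => rfl
      map_smul' := fun _ _ => rfl }

@[simp] lemma entryCLM_apply (i j : m) (A : Matrix m m ℝ) : entryCLM i j A = A i j := rfl

/-- mulVec as a continuous linear map in the matrix -/
noncomputable def mvCLM (v : m → ℝ) : Matrix m m ℝ →L[ℝ] (m → ℝ) :=
  LinearMap.toContinuousLinearMap
    { toFun := fun A => A.mulVec v
      map_add' := fun A B => Matrix.add_mulVec A B v
      map_smul' := fun r A => Matrix.smul_mulVec r A v }

@[simp] lemma mvCLM_apply (v : m → ℝ) (A : Matrix m m ℝ) : mvCLM v A = A.mulVec v := rfl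

lemma expSummable (X : Matrix m m ℝ) :
    Summable (fun k : ℕ => ((k.factorial : ℝ))⁻¹ • X ^ k) :=
  expSeries_summable' (𝕂 := ℝ) X

lemma exp_entry (X : Matrix m m ℝ) (i j : m) :
    exp X i j = ∑' k : ℕ, ((k.factorial : ℝ))⁻¹ * (X ^ k) i j := by
  have h := (entryCLM i j).map_tsum (expSummable X)
  rw [exp_eq_tsum ℝ]
  simpa [smul_eq_mul] using h

lemma exp_mulVec_eq_self (X : Matrix m m ℝ) (v : m → ℝ) (h : X.mulVec v = 0) :
    (exp X).mulVec v = v := by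
  have h' := (mvCLM v).map_tsum (expSummable X)
  rw [exp_eq_tsum ℝ]
  rw [show (mvCLM v) (∑' k : ℕ, ((k.factorial : ℝ))⁻¹ • X ^ k)
      = (∑' k : ℕ, ((k.factorial : ℝ))⁻¹ • X ^ k).mulVec v from rfl] at h'
  rw [h']
  have hterm : ∀ k : ℕ, (mvCLM v) (((k.factorial : ℝ))⁻¹ • X ^ k)
      = if k = 0 then v else 0 := by
    intro k
    cases k with
    | zero => simp [Matrix.one_mulVec]
    | succ k =>
      simp only [mvCLM_apply, Matrix.smul_mulVec]
      rw [pow_succ, ← Matrix.mulVec_mulVec, h, Matrix.mulVec_zero, smul_zero]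
      simp
  calc (∑' k : ℕ, (mvCLM v) (((k.factorial : ℝ))⁻¹ • X ^ k))
      = ∑' k : ℕ, (if k = 0 then v else 0) := tsum_congr hterm
    _ = v := by
        rw [tsum_eq_single 0]
        · simp
        · intro b hb; simp [hb]

lemma pow_entry_nonneg {X : Matrix m m ℝ} (hX : ∀ i j, 0 ≤ X i j) (k : ℕ) :
    ∀ i j, 0 ≤ (X ^ k) i j := by
  induction k with
  | zero => intro i j; rw [pow_zero]; by_cases h : i = j <;> simp [Matrix.one_apply, h]
  | succ k ih =>
    intro i j
    rw [pow_succ, Matrix.mul_apply]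
    exact Finset.sum_nonneg fun l _ => mul_nonneg (ih i l) (hX l j)

lemma exp_entry_nonneg {X : Matrix m m ℝ} (hX : ∀ i j, 0 ≤ X i j) (i j : m) :
    0 ≤ exp X i j := by
  rw [exp_entry]
  exact tsum_nonneg fun k => mul_nonneg (by positivity) (pow_entry_nonneg hX k i j)

lemma summable_exp_entry (X : Matrix m m ℝ) (i j : m) :
    Summable (fun k : ℕ => ((k.factorial : ℝ))⁻¹ * (X ^ k) i j) := by
  have := (expSummable X).map (entryCLM i j) (entryCLM i j).continuous
  simpa [smul_eq_mul, Function.comp_def] using this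

lemma exp_entry_pos {X : Matrix m m ℝ} (hX : ∀ i j, 0 ≤ X i j) {i j : m}
    (h : ∃ k : ℕ, 0 < (X ^ k) i j) : 0 < exp X i j := by
  obtain ⟨k, hk⟩ := h
  rw [exp_entry]
  have hle : ((k.factorial : ℝ))⁻¹ * (X ^ k) i j
      ≤ ∑' k : ℕ, ((k.factorial : ℝ))⁻¹ * (X ^ k) i j :=
    Summable.le_tsum (summable_exp_entry X i j) k
      (fun b _ => mul_nonneg (by positivity) (pow_entry_nonneg hX b i j))
  have : 0 < ((k.factorial : ℝ))⁻¹ * (X ^ k) i j := by positivity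
  linarith

lemma exp_smul_one (r : ℝ) :
    exp (r • (1 : Matrix m m ℝ)) = Real.exp r • (1 : Matrix m m ℝ) := by
  have h1 : r • (1 : Matrix m m ℝ) = algebraMap ℝ (Matrix m m ℝ) r :=
    (Algebra.algebraMap_eq_smul_one r).symm
  rw [h1]
  refine (map_exp (algebraMap ℝ (Matrix m m ℝ)) (continuous_algebraMap _ _) r).symm.trans ?_
  rw [← Real.exp_eq_exp_ℝ, Algebra.algebraMap_eq_smul_one]

lemma exp_eq_one_add_mul (X : Matrix m m ℝ) :
    ∃ C : Matrix m m ℝ, exp X = 1 + X * C := by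
  refine ⟨∑' k : ℕ, (((k+1).factorial : ℝ))⁻¹ • X ^ k, ?_⟩
  have hs : Summable (fun k : ℕ => (((k+1).factorial : ℝ))⁻¹ • X ^ k) := by
    apply Summable.of_norm_bounded_eventually_nat (g := fun k => ‖X‖ ^ k / k.factorial)
      (Real.summable_pow_div_factorial ‖X‖)
    filter_upwards [Filter.eventually_ge_atTop 1] with k hk
    rw [norm_smul]
    have h1 : ‖X ^ k‖ ≤ ‖X‖ ^ k := norm_pow_le' X hk
    have h2 : ‖(((k+1).factorial : ℝ))⁻¹‖ ≤ ((k.factorial : ℝ))⁻¹ := by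
      rw [Real.norm_eq_abs, abs_of_nonneg (by positivity)]
      apply inv_anti₀ (by positivity)
      exact_mod_cast Nat.factorial_le (Nat.le_succ k)
    calc ‖(((k+1).factorial : ℝ))⁻¹‖ * ‖X ^ k‖ ≤ ((k.factorial : ℝ))⁻¹ * ‖X‖ ^ k :=
          mul_le_mul h2 h1 (norm_nonneg _) (by positivity)
      _ = ‖X‖ ^ k / k.factorial := by ring
  have hX : X * (∑' k : ℕ, (((k+1).factorial : ℝ))⁻¹ • X ^ k)
      = ∑' k : ℕ, (((k+1).factorial : ℝ))⁻¹ • X ^ (k+1) := by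
    have := (ContinuousLinearMap.mul ℝ (Matrix m m ℝ) X).map_tsum hs
    simp only [ContinuousLinearMap.mul_apply'] at this
    refine Eq.trans this ?_
    exact tsum_congr fun k => by rw [mul_smul_comm, ← pow_succ']
  rw [exp_eq_tsum ℝ]
  show (∑' k : ℕ, ((k.factorial : ℝ))⁻¹ • X ^ k) = _
  rw [Summable.tsum_eq_zero_add (expSummable X), hX]
  simp

end MatrixExp

/-! ### Laplacian lemmas -/

section Lap

variable {N : ℕ} (a : Fin N → Fin N → ℝ)

lemma gL_mulVec (x : Fin N → ℝ) (i : Fin N) :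
    (graphLaplacian a).mulVec x i = ∑ j ∈ Finset.univ.erase i, a i j * (x i - x j) := by
  rw [Matrix.mulVec, dotProduct]
  rw [← Finset.add_sum_erase _ _ (Finset.mem_univ i)]
  have h1 : graphLaplacian a i i * x i = ∑ j ∈ Finset.univ.erase i, a i j * x i := by
    rw [show graphLaplacian a i i = ∑ k ∈ Finset.univ.erase i, a i k by simp [graphLaplacian],
      Finset.sum_mul]
  have h2 : ∀ j ∈ Finset.univ.erase i, graphLaplacian a i j * x j = -(a i j * x j) := by
    intro j hj
    have hij : i ≠ j := (Finset.ne_of_mem_erase hj).symm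
    simp [graphLaplacian, hij, neg_mul]
  rw [h1, Finset.sum_congr rfl h2, ← Finset.sum_add_distrib]
  exact Finset.sum_congr rfl fun j _ => by ring

lemma gL_mulVec_const (c : ℝ) : (graphLaplacian a).mulVec (fun _ => c) = 0 := by
  funext i
  rw [gL_mulVec]
  simp

lemma not_const_in_range [Nonempty (Fin N)] (ha : ∀ i j, 0 ≤ a i j) {c : ℝ} (hc : c ≠ 0)
    (y : Fin N → ℝ) : (graphLaplacian a).mulVec y ≠ fun _ => c := by
  have key : ∀ (d : ℝ), 0 < d → ∀ z : Fin N → ℝ, (graphLaplacian a).mulVec z ≠ fun _ => d := by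
    intro d hd z hz
    obtain ⟨v, -, hv⟩ := Finset.exists_min_image Finset.univ z Finset.univ_nonempty
    have h1 : (graphLaplacian a).mulVec z v ≤ 0 := by
      rw [gL_mulVec]
      apply Finset.sum_nonpos
      intro j _
      exact mul_nonpos_of_nonneg_of_nonpos (ha v j) (by linarith [hv j (Finset.mem_univ j)])
    rw [hz] at h1
    exact absurd h1 (not_le.mpr hd)
  rcases hc.lt_or_gt with h | h
  · intro hz
    apply key (-c) (by linarith) (-y)
    rw [Matrix.mulVec_neg, hz]
    rfl
  · exact key c h y

end Lap

/-! ### Stochastic matrix lemmas -/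

section Stoch

variable {m : Type*} [Fintype m] [DecidableEq m] [Nonempty m]

noncomputable def mxv (v : m → ℝ) : ℝ := Finset.univ.sup' Finset.univ_nonempty v
noncomputable def mnv (v : m → ℝ) : ℝ := Finset.univ.inf' Finset.univ_nonempty v

lemma le_mxv (v : m → ℝ) (i : m) : v i ≤ mxv v := Finset.le_sup' v (Finset.mem_univ i)
lemma mnv_le (v : m → ℝ) (i : m) : mnv v ≤ v i := Finset.inf'_le v (Finset.mem_univ i)
lemma mxv_le {v : m → ℝ} {b : ℝ} (h : ∀ i, v i ≤ b) : mxv v ≤ b :=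
  Finset.sup'_le _ _ fun i _ => h i
lemma le_mnv {v : m → ℝ} {b : ℝ} (h : ∀ i, b ≤ v i) : b ≤ mnv v :=
  Finset.le_inf' _ _ fun i _ => h i
lemma pos_mnv {v : m → ℝ} (h : ∀ i, 0 < v i) : 0 < mnv v :=
  (Finset.lt_inf'_iff _).mpr fun i _ => h i
lemma mnv_le_mxv (v : m → ℝ) : mnv v ≤ mxv v := by
  obtain ⟨i⟩ := (inferInstance : Nonempty m)
  exact le_trans (mnv_le v i) (le_mxv v i)

lemma mulVec_le_combo (P : Matrix m m ℝ) (hP : ∀ i j, 0 ≤ P i j)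
    (hrow : ∀ i, ∑ j, P i j = 1) (r : m) {c : ℝ} (hc : 0 ≤ c) (hcr : ∀ i, c ≤ P i r)
    (x : m → ℝ) (i : m) :
    P.mulVec x i ≤ c * x r + (1 - c) * mxv x := by
  set g : m → ℝ := fun j => P i j - if j = r then c else 0 with hg
  have hgnn : ∀ j, 0 ≤ g j := by
    intro j
    by_cases h : j = r
    · subst h; simpa [hg] using hcr i
    · simpa [hg, h] using hP i j
  have hgsum : ∑ j, g j = 1 - c := by
    simp [hg, Finset.sum_sub_distrib, hrow i, Finset.sum_ite_eq']
  have h1 : P.mulVec x i = c * x r + ∑ j, g j * x j := by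
    rw [Matrix.mulVec, dotProduct]
    rw [show ∑ j, g j * x j = ∑ j, (P i j * x j - (if j = r then c else 0) * x j) from
      Finset.sum_congr rfl fun j _ => by simp only [hg]; ring]
    rw [Finset.sum_sub_distrib]
    simp [Finset.sum_ite_eq']
  rw [h1]
  have h2 : ∑ j, g j * x j ≤ (1 - c) * mxv x := by
    calc ∑ j, g j * x j ≤ ∑ j, g j * mxv x := by
          apply Finset.sum_le_sum
          intro j _
          exact mul_le_mul_of_nonneg_left (le_mxv x j) (hgnn j)
      _ = (1 - c) * mxv x := by rw [← Finset.sum_mul, hgsum]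
  linarith

lemma combo_le_mulVec (P : Matrix m m ℝ) (hP : ∀ i j, 0 ≤ P i j)
    (hrow : ∀ i, ∑ j, P i j = 1) (r : m) {c : ℝ} (hc : 0 ≤ c) (hcr : ∀ i, c ≤ P i r)
    (x : m → ℝ) (i : m) :
    c * x r + (1 - c) * mnv x ≤ P.mulVec x i := by
  have h := mulVec_le_combo P hP hrow r hc hcr (-x) i
  rw [Matrix.mulVec_neg] at h
  have hsup : mxv (-x) = - mnv x := by
    apply le_antisymm
    · apply mxv_le
      intro j
      simp only [Pi.neg_apply, neg_le_neg_iff]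
      exact mnv_le x j
    · rw [neg_le]
      apply le_mnv
      intro j
      have := le_mxv (-x) j
      rw [Pi.neg_apply] at this
      linarith
  rw [hsup] at h
  simp only [Pi.neg_apply] at h
  linarith

lemma mulVec_le_sup (P : Matrix m m ℝ) (hP : ∀ i j, 0 ≤ P i j)
    (hrow : ∀ i, ∑ j, P i j = 1) (x : m → ℝ) (i : m) :
    P.mulVec x i ≤ mxv x := by
  obtain ⟨r⟩ := (inferInstance : Nonempty m)
  have := mulVec_le_combo P hP hrow r le_rfl (fun i => hP i r) x i
  simpa using this

lemma inf_le_mulVec (P : Matrix m m ℝ) (hP : ∀ i j, 0 ≤ P i j)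
    (hrow : ∀ i, ∑ j, P i j = 1) (x : m → ℝ) (i : m) :
    mnv x ≤ P.mulVec x i := by
  obtain ⟨r⟩ := (inferInstance : Nonempty m)
  have := combo_le_mulVec P hP hrow r le_rfl (fun i => hP i r) x i
  simpa using this

lemma contraction (P : Matrix m m ℝ) (hP : ∀ i j, 0 ≤ P i j)
    (hrow : ∀ i, ∑ j, P i j = 1) (r : m) {c : ℝ} (hc : 0 ≤ c) (hcr : ∀ i, c ≤ P i r)
    (x : m → ℝ) :
    mxv (P.mulVec x) - mnv (P.mulVec x) ≤ (1 - c) * (mxv x - mnv x) := by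
  have h1 : mxv (P.mulVec x) ≤ c * x r + (1 - c) * mxv x :=
    mxv_le fun i => mulVec_le_combo P hP hrow r hc hcr x i
  have h2 : c * x r + (1 - c) * mnv x ≤ mnv (P.mulVec x) :=
    le_mnv fun i => combo_le_mulVec P hP hrow r hc hcr x i
  linarith [mul_sub (1 - c) (mxv x) (mnv x)]

end Stoch

/-! ### Kronecker lemmas -/

section Kron

variable {N n : ℕ}

attribute [local instance] Matrix.linftyOpSemiNormedRing Matrix.linftyOpNormedRing
  Matrix.linftyOpNormedAlgebra

/-- `A ↦ A ⊗ₖ 1` as an algebra homomorphism. -/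
noncomputable def kronAlgHom (N n : ℕ) :
    Matrix (Fin N) (Fin N) ℝ →ₐ[ℝ] Matrix (Fin N × Fin n) (Fin N × Fin n) ℝ where
  toFun A := A ⊗ₖ (1 : Matrix (Fin n) (Fin n) ℝ)
  map_one' := Matrix.one_kronecker_one
  map_mul' A B := by
    have := Matrix.mul_kronecker_mul A B (1 : Matrix (Fin n) (Fin n) ℝ)
      (1 : Matrix (Fin n) (Fin n) ℝ)
    rw [one_mul] at this
    exact this
  map_zero' := Matrix.zero_kronecker 1
  map_add' A B := Matrix.add_kronecker A B 1
  commutes' r := by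
    show (algebraMap ℝ (Matrix (Fin N) (Fin N) ℝ) r) ⊗ₖ (1 : Matrix (Fin n) (Fin n) ℝ) = _
    rw [Algebra.algebraMap_eq_smul_one, Algebra.algebraMap_eq_smul_one,
      Matrix.smul_kronecker, Matrix.one_kronecker_one]

lemma exp_kron (A : Matrix (Fin N) (Fin N) ℝ) :
    exp (A ⊗ₖ (1 : Matrix (Fin n) (Fin n) ℝ)) = (exp A) ⊗ₖ 1 := by
  have hc : Continuous (kronAlgHom N n) :=
    (kronAlgHom N n).toLinearMap.continuous_of_finiteDimensional
  exact (map_exp (kronAlgHom N n) hc A).symm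

lemma kron_mulVec (A : Matrix (Fin N) (Fin N) ℝ) (v : Fin N × Fin n → ℝ) (i : Fin N) (k : Fin n) :
    (A ⊗ₖ (1 : Matrix (Fin n) (Fin n) ℝ)).mulVec v (i, k)
      = A.mulVec (fun j => v (j, k)) i := by
  rw [Matrix.mulVec, dotProduct, Fintype.sum_prod_type]
  rw [Matrix.mulVec, dotProduct]
  apply Finset.sum_congr rfl
  intro j _
  rw [Finset.sum_eq_single k]
  · simp [Matrix.kroneckerMap_apply, Matrix.one_apply]
  · intro l _ hl
    simp [Matrix.kroneckerMap_apply, Matrix.one_apply, Ne.symm hl]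
  · simp

end Kron

/-! ### Euclidean norm lemmas -/

section Enorm

variable {m : Type*} [Fintype m]

lemma enorm_nonneg' (v : m → ℝ) : 0 ≤ euclidNorm v := Real.sqrt_nonneg _

lemma abs_le_enorm (v : m → ℝ) (p : m) : |v p| ≤ euclidNorm v := by
  rw [← Real.sqrt_sq_eq_abs]
  apply Real.sqrt_le_sqrt
  exact Finset.single_le_sum (fun i _ => sq_nonneg (v i)) (Finset.mem_univ p)

lemma enorm_le (v : m → ℝ) {C : ℝ} (hC : 0 ≤ C) (h : ∀ p, |v p| ≤ C) :
    euclidNorm v ≤ Real.sqrt (Fintype.card m) * C := by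
  rw [← Real.sqrt_sq hC, ← Real.sqrt_mul (by positivity)]
  apply Real.sqrt_le_sqrt
  calc ∑ i, v i ^ 2 ≤ ∑ _i : m, C ^ 2 := by
        apply Finset.sum_le_sum
        intro i _
        rw [← sq_abs]
        exact pow_le_pow_left₀ (abs_nonneg _) (h i) 2
    _ = (Fintype.card m) * C ^ 2 := by
        rw [Finset.sum_const, Finset.card_univ, nsmul_eq_mul]

lemma pinorm_le_enorm (v : m → ℝ) : ‖v‖ ≤ euclidNorm v := by
  rw [pi_norm_le_iff_of_nonneg (enorm_nonneg' v)]
  intro i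
  rw [Real.norm_eq_abs]
  exact abs_le_enorm v i

end Enorm

end ConsensusProofAux

/-! ### Per-slice analysis -/

namespace ConsensusProofAux

open NormedSpace

section Family

variable {N : ℕ} [Nonempty (Fin N)]

lemma family_limit
    (S : ℝ → Matrix (Fin N) (Fin N) ℝ)
    (hS0 : S 0 = 1)
    (hSadd : ∀ s t : ℝ, S (s + t) = S s * S t)
    (hSnn : ∀ t : ℝ, 0 ≤ t → ∀ i j, 0 ≤ S t i j)
    (hrow : ∀ t : ℝ, 0 ≤ t → ∀ i, ∑ j, S t i j = 1)
    (r : Fin N) {δ : ℝ} (hδpos : 0 < δ) (hδ1 : δ ≤ 1) (hδle : ∀ i, δ / 2 ≤ S 1 i r)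
    (x : Fin N → ℝ) :
    ∃ mk : ℝ, ∀ t : ℝ, 0 ≤ t → ∀ i, |(S t).mulVec x i - mk|
        ≤ (1 - δ/2) ^ (⌊t⌋₊) * (mxv x - mnv x) := by
  set ρ : ℝ := 1 - δ/2 with hρ
  have hρ0 : 0 ≤ ρ := by rw [hρ]; linarith
  have hcomp : ∀ s t : ℝ, (S (s + t)).mulVec x = (S s).mulVec ((S t).mulVec x) := by
    intro s t
    rw [Matrix.mulVec_mulVec, ← hSadd]
  have hmono1 : ∀ s : ℝ, 0 ≤ s → ∀ t : ℝ, 0 ≤ t →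
      mxv ((S (s + t)).mulVec x) ≤ mxv ((S t).mulVec x) := by
    intro s hs t ht
    apply mxv_le
    intro i
    rw [hcomp]
    exact mulVec_le_sup (S s) (hSnn s hs) (hrow s hs) _ i
  have hmono2 : ∀ s : ℝ, 0 ≤ s → ∀ t : ℝ, 0 ≤ t →
      mnv ((S t).mulVec x) ≤ mnv ((S (s + t)).mulVec x) := by
    intro s hs t ht
    apply le_mnv
    intro i
    rw [hcomp]
    exact inf_le_mulVec (S s) (hSnn s hs) (hrow s hs) _ i
  have hcontr : ∀ t : ℝ, 0 ≤ t →
      mxv ((S (1 + t)).mulVec x) - mnv ((S (1 + t)).mulVec x)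
        ≤ ρ * (mxv ((S t).mulVec x) - mnv ((S t).mulVec x)) := by
    intro t ht
    rw [hcomp]
    exact contraction (S 1) (hSnn 1 zero_le_one) (hrow 1 zero_le_one) r
      (by linarith) hδle _
  have hVnat : ∀ j : ℕ, ∀ t : ℝ, 0 ≤ t →
      mxv ((S ((j : ℝ) + t)).mulVec x) - mnv ((S ((j : ℝ) + t)).mulVec x)
        ≤ ρ ^ j * (mxv ((S t).mulVec x) - mnv ((S t).mulVec x)) := by
    intro j
    induction j with
    | zero => intro t ht; simp
    | succ j ih =>
      intro t ht
      have heq : ((j + 1 : ℕ) : ℝ) + t = 1 + ((j : ℝ) + t) := by push_cast; ring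
      rw [heq]
      calc mxv ((S (1 + ((j:ℝ) + t))).mulVec x) - mnv ((S (1 + ((j:ℝ) + t))).mulVec x)
          ≤ ρ * (mxv ((S ((j:ℝ) + t)).mulVec x) - mnv ((S ((j:ℝ) + t)).mulVec x)) :=
            hcontr _ (by positivity)
        _ ≤ ρ * (ρ ^ j * (mxv ((S t).mulVec x) - mnv ((S t).mulVec x))) :=
            mul_le_mul_of_nonneg_left (ih t ht) hρ0
        _ = ρ ^ (j + 1) * (mxv ((S t).mulVec x) - mnv ((S t).mulVec x)) := by ring
  have hx0 : (S 0).mulVec x = x := by rw [hS0, Matrix.one_mulVec]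
  have hVfloor : ∀ t : ℝ, 0 ≤ t →
      mxv ((S t).mulVec x) - mnv ((S t).mulVec x) ≤ ρ ^ (⌊t⌋₊) * (mxv x - mnv x) := by
    intro t ht
    have hs : (0 : ℝ) ≤ t - ⌊t⌋₊ := sub_nonneg.mpr (Nat.floor_le ht)
    have h1 := hVnat ⌊t⌋₊ (t - ⌊t⌋₊) hs
    rw [show ((⌊t⌋₊ : ℝ) + (t - ⌊t⌋₊)) = t from by ring] at h1
    have h2 : mxv ((S (t - ⌊t⌋₊)).mulVec x) ≤ mxv x := by
      have := hmono1 (t - ⌊t⌋₊) hs 0 le_rfl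
      rw [add_zero, hx0] at this
      exact this
    have h3 : mnv x ≤ mnv ((S (t - ⌊t⌋₊)).mulVec x) := by
      have := hmono2 (t - ⌊t⌋₊) hs 0 le_rfl
      rw [add_zero, hx0] at this
      exact this
    calc mxv ((S t).mulVec x) - mnv ((S t).mulVec x)
        ≤ ρ ^ ⌊t⌋₊ * (mxv ((S (t - ⌊t⌋₊)).mulVec x) - mnv ((S (t - ⌊t⌋₊)).mulVec x)) := h1
      _ ≤ ρ ^ ⌊t⌋₊ * (mxv x - mnv x) := by
          apply mul_le_mul_of_nonneg_left _ (pow_nonneg hρ0 _)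
          linarith
  -- the limit value
  have hbdd : BddBelow (Set.range fun j : ℕ => mxv ((S (j : ℝ)).mulVec x)) := by
    refine ⟨mnv x, ?_⟩
    rintro b ⟨j, rfl⟩
    have h3 : mnv x ≤ mnv ((S (j : ℝ)).mulVec x) := by
      have := hmono2 (j : ℝ) (Nat.cast_nonneg j) 0 le_rfl
      rw [add_zero, hx0] at this
      exact this
    exact le_trans h3 (mnv_le_mxv _)
  set mk : ℝ := ⨅ j : ℕ, mxv ((S (j : ℝ)).mulVec x) with hmk
  have hmono1' : ∀ s t : ℝ, 0 ≤ t → t ≤ s → mxv ((S s).mulVec x) ≤ mxv ((S t).mulVec x) := by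
    intro s t ht hts
    have := hmono1 (s - t) (by linarith) t ht
    rw [show (s - t) + t = s from by ring] at this
    exact this
  have hmono2' : ∀ s t : ℝ, 0 ≤ t → t ≤ s → mnv ((S t).mulVec x) ≤ mnv ((S s).mulVec x) := by
    intro s t ht hts
    have := hmono2 (s - t) (by linarith) t ht
    rw [show (s - t) + t = s from by ring] at this
    exact this
  have hmk_le : ∀ t : ℝ, 0 ≤ t → mk ≤ mxv ((S t).mulVec x) := by
    intro t ht
    refine le_trans (ciInf_le hbdd ⌈t⌉₊) ?_
    exact hmono1' (⌈t⌉₊ : ℝ) t ht (Nat.le_ceil t)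
  have hle_mk : ∀ t : ℝ, 0 ≤ t → mnv ((S t).mulVec x) ≤ mk := by
    intro t ht
    apply le_ciInf
    intro j
    rcases le_total t (j : ℝ) with h | h
    · exact le_trans (hmono2' (j : ℝ) t ht h) (mnv_le_mxv _)
    · exact le_trans (mnv_le_mxv _) (hmono1' t (j : ℝ) (Nat.cast_nonneg j) h)
  refine ⟨mk, ?_⟩
  intro t ht i
  have h1 : (S t).mulVec x i ≤ mxv ((S t).mulVec x) := le_mxv _ i
  have h2 : mnv ((S t).mulVec x) ≤ (S t).mulVec x i := mnv_le _ i
  have h3 := hmk_le t ht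
  have h4 := hle_mk t ht
  have h5 := hVfloor t ht
  rw [abs_le]
  constructor <;> [skip; skip] <;> linarith

end Family

end ConsensusProofAux

/-! ### The two directions -/

namespace ConsensusProofAux

open NormedSpace Filter
open scoped Kronecker

section Directions

variable {N n : ℕ}

attribute [local instance] Matrix.linftyOpSemiNormedRing Matrix.linftyOpNormedRing
  Matrix.linftyOpNormedAlgebra

lemma forward_main [Nonempty (Fin N)] [Nonempty (Fin n)]
    (a : Fin N → Fin N → ℝ) (ha : ∀ i j, 0 ≤ a i j)
    (q0 qinf : Fin N × Fin n → ℝ)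
    (hcons : ∀ i j : Fin N, ∀ k : Fin n, qinf (i, k) = qinf (j, k)) (hne0 : qinf ≠ 0)
    {η lam : ℝ} (hη : 0 < η) (hlam : 0 < lam)
    (hbound : ∀ t : ℝ, 0 ≤ t →
      euclidNorm ((exp ((-t) • (graphLaplacian a ⊗ₖ (1 : Matrix (Fin n) (Fin n) ℝ)))).mulVec q0
          - qinf) ≤ η * Real.exp (-lam * t) * euclidNorm (q0 - qinf))
    (y : Fin N × Fin n → ℝ)
    (hy : ((graphLaplacian a) ⊗ₖ (1 : Matrix (Fin n) (Fin n) ℝ)).mulVec y = q0) : False := by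
  classical
  set M := graphLaplacian a ⊗ₖ (1 : Matrix (Fin n) (Fin n) ℝ) with hM
  have hrange : ∃ z, M.mulVec z = qinf := by
    by_cases hq : q0 = qinf
    · exact ⟨y, hy.trans (by rw [hq])⟩
    · have hmem : ∀ j : ℕ,
          (exp ((-(j:ℝ)) • M)).mulVec q0 ∈ LinearMap.range (Matrix.mulVecLin M) := by
        intro j
        have hcomm : Commute (exp ((-(j:ℝ)) • M)) M :=
          ((Commute.refl M).smul_left (-(j:ℝ))).exp_left
        refine ⟨(exp ((-(j:ℝ)) • M)).mulVec y, ?_⟩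
        rw [Matrix.mulVecLin_apply, Matrix.mulVec_mulVec, ← hcomm.eq,
          ← Matrix.mulVec_mulVec, hy]
      have htend : Tendsto (fun j : ℕ => (exp ((-(j:ℝ)) • M)).mulVec q0)
          atTop (nhds qinf) := by
        rw [tendsto_iff_norm_sub_tendsto_zero]
        apply squeeze_zero (fun j => norm_nonneg _)
          (g := fun j : ℕ => η * Real.exp (-lam * (j:ℝ)) * euclidNorm (q0 - qinf))
        · intro j
          exact le_trans (pinorm_le_enorm _) (hbound (j:ℝ) (Nat.cast_nonneg j))
        · have h1 : ∀ j : ℕ, η * Real.exp (-lam * (j:ℝ)) * euclidNorm (q0 - qinf)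
              = (η * euclidNorm (q0 - qinf)) * (Real.exp (-lam))^j := by
            intro j
            rw [show -lam * (j:ℝ) = (j:ℝ) * (-lam) from mul_comm _ _, Real.exp_nat_mul]
            ring
          simp only [h1]
          simpa using ((tendsto_pow_atTop_nhds_zero_of_lt_one (Real.exp_nonneg _)
            (by rw [Real.exp_lt_one_iff]; linarith)).const_mul (η * euclidNorm (q0 - qinf)))
      have hcl := Submodule.closed_of_finiteDimensional
        (LinearMap.range (Matrix.mulVecLin M))
      obtain ⟨z, hz⟩ := hcl.mem_of_tendsto htend (Filter.Eventually.of_forall hmem)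
      exact ⟨z, by rw [← Matrix.mulVecLin_apply]; exact hz⟩
  obtain ⟨z, hz⟩ := hrange
  obtain ⟨p, hp⟩ : ∃ p, qinf p ≠ 0 := by
    by_contra h
    push_neg at h
    exact hne0 (funext h)
  obtain ⟨i0, k0⟩ := p
  apply not_const_in_range a ha hp (fun j => z (j, k0))
  funext i
  rw [← kron_mulVec, ← hM]
  rw [show M.mulVec z (i, k0) = qinf (i, k0) from congrFun hz (i, k0)]
  exact hcons i i0 k0

end Directions

end ConsensusProofAux

namespace ConsensusProofAux

open NormedSpace Filter
open scoped Kronecker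

section Backward

variable {N n : ℕ}

attribute [local instance] Matrix.linftyOpSemiNormedRing Matrix.linftyOpNormedRing
  Matrix.linftyOpNormedAlgebra

lemma backward_main [Nonempty (Fin N)] [Nonempty (Fin n)]
    (a : Fin N → Fin N → ℝ) (ha : ∀ i j, 0 ≤ a i j)
    (r : Fin N) (hroot : ∀ v, Relation.ReflTransGen (fun u v => 0 < a v u) r v)
    (q0 : Fin N × Fin n → ℝ)
    (hnr : ¬ ∃ y : Fin N × Fin n → ℝ,
        ((graphLaplacian a) ⊗ₖ (1 : Matrix (Fin n) (Fin n) ℝ)).mulVec y = q0) :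
    ∃ qinf : Fin N × Fin n → ℝ,
      (∀ i j : Fin N, ∀ k : Fin n, qinf (i, k) = qinf (j, k)) ∧ qinf ≠ 0 ∧
      ∃ η > (0:ℝ), ∃ lam > (0:ℝ), ∀ t : ℝ, 0 ≤ t →
        euclidNorm ((exp ((-t) • ((graphLaplacian a) ⊗ₖ (1 : Matrix (Fin n) (Fin n) ℝ)))).mulVec q0
            - qinf) ≤ η * Real.exp (-lam * t) * euclidNorm (q0 - qinf) := by
  classical
  set L := graphLaplacian a with hLdef
  set c : ℝ := ∑ i, ∑ k ∈ Finset.univ.erase i, a i k with hcdef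
  set B : Matrix (Fin N) (Fin N) ℝ := c • 1 - L with hBdef
  have hLdiag : ∀ i, L i i = ∑ k ∈ Finset.univ.erase i, a i k := fun i => by
    simp [hLdef, graphLaplacian]
  have hLoff : ∀ i j, i ≠ j → L i j = -(a i j) := fun i j h => by
    simp [hLdef, graphLaplacian, h]
  have hcnn : ∀ i, L i i ≤ c := by
    intro i
    rw [hLdiag]
    exact Finset.single_le_sum (f := fun i => ∑ k ∈ Finset.univ.erase i, a i k)
      (fun i _ => Finset.sum_nonneg fun k _ => ha i k) (Finset.mem_univ i)
  have hBnn : ∀ i j, 0 ≤ B i j := by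
    intro i j
    by_cases h : i = j
    · subst h
      have hB : B i i = c - L i i := by
        simp [hBdef, Matrix.sub_apply, Matrix.smul_apply, Matrix.one_apply_eq, smul_eq_mul]
      rw [hB]
      linarith [hcnn i]
    · have hB : B i j = a i j := by
        simp [hBdef, Matrix.sub_apply, Matrix.smul_apply, Matrix.one_apply_ne h,
          hLoff i j h, smul_eq_mul]
      rw [hB]
      exact ha i j
  set S : ℝ → Matrix (Fin N) (Fin N) ℝ := fun t => exp ((-t) • L) with hSdef
  have hSapp : ∀ t, S t = exp ((-t) • L) := fun t => rfl
  have hsplit : ∀ t : ℝ, (-t) • L = t • B + (-(t*c)) • (1 : Matrix (Fin N) (Fin N) ℝ) := by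
    intro t
    rw [hBdef, smul_sub, smul_smul]
    ext i j
    simp only [Matrix.add_apply, Matrix.sub_apply, Matrix.smul_apply, smul_eq_mul]
    ring
  have hdecomp : ∀ t, S t = Real.exp (-(t*c)) • exp (t • B) := by
    intro t
    rw [hSapp, hsplit t,
      Matrix.exp_add_of_commute _ _ ((Commute.one_right (t • B)).smul_right (-(t*c))),
      exp_smul_one, mul_smul_comm, mul_one]
  have hSnn : ∀ t : ℝ, 0 ≤ t → ∀ i j, 0 ≤ S t i j := by
    intro t ht i j
    rw [hdecomp t, Matrix.smul_apply, smul_eq_mul]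
    refine mul_nonneg (Real.exp_nonneg _) (exp_entry_nonneg ?_ i j)
    intro i' j'
    rw [Matrix.smul_apply, smul_eq_mul]
    exact mul_nonneg ht (hBnn i' j')
  have hones : ∀ t : ℝ, (S t).mulVec (fun _ => (1:ℝ)) = fun _ => 1 := by
    intro t
    rw [hSapp]
    apply exp_mulVec_eq_self
    rw [Matrix.smul_mulVec, hLdef, gL_mulVec_const, smul_zero]
  have hrow : ∀ t : ℝ, 0 ≤ t → ∀ i, ∑ j, S t i j = 1 := by
    intro t _ i
    have h1 := congrFun (hones t) i
    simpa [Matrix.mulVec, dotProduct] using h1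
  have hS0 : S 0 = 1 := by rw [hSapp]; simp
  have hSadd : ∀ s t : ℝ, S (s + t) = S s * S t := by
    intro s t
    rw [hSapp, hSapp, hSapp, show (-(s+t)) • L = (-s) • L + (-t) • L from by
      rw [neg_add, add_smul]]
    exact Matrix.exp_add_of_commute _ _ (((Commute.refl L).smul_left _).smul_right _)
  have hreach : ∀ i, ∃ k : ℕ, 0 < (B ^ k) i r := by
    intro i
    induction hroot i with
    | refl => exact ⟨0, by simp [Matrix.one_apply_eq]⟩
    | @tail b u hrb hbu ih =>
      by_cases hub : u = b
      · rw [hub]; exact ih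
      · obtain ⟨k, hk⟩ := ih
        refine ⟨k + 1, ?_⟩
        rw [pow_succ', Matrix.mul_apply]
        have hBub : 0 < B u b := by
          have hB : B u b = a u b := by
            simp [hBdef, Matrix.sub_apply, Matrix.smul_apply, Matrix.one_apply_ne hub,
              hLoff u b hub, smul_eq_mul]
          rw [hB]
          exact hbu
        refine lt_of_lt_of_le (mul_pos hBub hk)
          (Finset.single_le_sum (f := fun l => B u l * (B ^ k) l r) ?_ (Finset.mem_univ b))
        intro l _
        exact mul_nonneg (hBnn u l) (pow_entry_nonneg hBnn k l r)
  have hcolpos : ∀ i, 0 < S 1 i r := by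
    intro i
    rw [hdecomp 1, Matrix.smul_apply, smul_eq_mul]
    refine mul_pos (Real.exp_pos _) (exp_entry_pos ?_ ?_)
    · intro i' j'
      rw [one_smul]
      exact hBnn i' j'
    · rw [one_smul]
      exact hreach i
  set δ : ℝ := mnv (fun i => S 1 i r) with hδdef
  have hδpos : 0 < δ := pos_mnv hcolpos
  have hδle : ∀ i, δ / 2 ≤ S 1 i r := by
    intro i
    have := mnv_le (fun i => S 1 i r) i
    linarith
  have hδ1 : δ ≤ 1 := by
    have h1 : δ ≤ S 1 r r := by
      have := mnv_le (fun i => S 1 i r) r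
      simpa using this
    have h2 : S 1 r r ≤ ∑ j, S 1 r j :=
      Finset.single_le_sum (fun j _ => hSnn 1 zero_le_one r j) (Finset.mem_univ r)
    rw [hrow 1 zero_le_one r] at h2
    linarith
  set ρ : ℝ := 1 - δ / 2 with hρdef
  have hρ0 : 0 < ρ := by rw [hρdef]; linarith
  have hρ1 : ρ < 1 := by rw [hρdef]; linarith
  -- per-slice limits
  have hfam : ∀ k : Fin n, ∃ mk : ℝ, ∀ t : ℝ, 0 ≤ t → ∀ i,
      |(S t).mulVec (fun j => q0 (j, k)) i - mk|
        ≤ ρ ^ (⌊t⌋₊) * (mxv (fun j => q0 (j, k)) - mnv (fun j => q0 (j, k))) :=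
    fun k => family_limit S hS0 hSadd hSnn hrow r hδpos hδ1 hδle (fun j => q0 (j, k))
  choose mfun hm using hfam
  set qinf : Fin N × Fin n → ℝ := fun p => mfun p.2 with hqinfdef
  have hcoord : ∀ t : ℝ, ∀ i k,
      (exp ((-t) • (L ⊗ₖ (1 : Matrix (Fin n) (Fin n) ℝ)))).mulVec q0 (i, k)
        = (S t).mulVec (fun j => q0 (j, k)) i := by
    intro t i k
    rw [show (-t) • (L ⊗ₖ (1 : Matrix (Fin n) (Fin n) ℝ)) = ((-t) • L) ⊗ₖ 1 from
      (Matrix.smul_kronecker _ _ _).symm, exp_kron, kron_mulVec, hSapp]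
  have hE0 : 0 ≤ euclidNorm (q0 - qinf) := enorm_nonneg' _
  have hpt : ∀ t : ℝ, 0 ≤ t → ∀ p : Fin N × Fin n,
      |((exp ((-t) • (L ⊗ₖ (1 : Matrix (Fin n) (Fin n) ℝ)))).mulVec q0 - qinf) p|
        ≤ ρ ^ (⌊t⌋₊) * (2 * euclidNorm (q0 - qinf)) := by
    rintro t ht ⟨i, k⟩
    rw [Pi.sub_apply, hcoord]
    refine le_trans (hm k t ht i) (mul_le_mul_of_nonneg_left ?_ (pow_nonneg hρ0.le _))
    obtain ⟨i1, -, hi1⟩ := Finset.exists_mem_eq_sup' Finset.univ_nonempty (fun j => q0 (j, k))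
    obtain ⟨i2, -, hi2⟩ := Finset.exists_mem_eq_inf' Finset.univ_nonempty (fun j => q0 (j, k))
    have e1 : |q0 (i1, k) - mfun k| ≤ euclidNorm (q0 - qinf) := by
      have h := abs_le_enorm (q0 - qinf) (i1, k)
      simpa [Pi.sub_apply, hqinfdef] using h
    have e2 : |q0 (i2, k) - mfun k| ≤ euclidNorm (q0 - qinf) := by
      have h := abs_le_enorm (q0 - qinf) (i2, k)
      simpa [Pi.sub_apply, hqinfdef] using h
    have hx1 : mxv (fun j => q0 (j, k)) = q0 (i1, k) := hi1
    have hx2 : mnv (fun j => q0 (j, k)) = q0 (i2, k) := hi2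
    rw [hx1, hx2]
    have a1 := abs_le.mp e1
    have a2 := abs_le.mp e2
    linarith [a1.1, a1.2, a2.1, a2.2]
  -- qinf is nonzero
  have hne0 : qinf ≠ 0 := by
    intro h0
    apply hnr
    set M := L ⊗ₖ (1 : Matrix (Fin n) (Fin n) ℝ) with hMdef
    have hseq : ∀ j : ℕ, ∀ p : Fin N × Fin n,
        |(exp ((-(j:ℝ)) • M)).mulVec q0 p| ≤ ρ ^ j * (2 * euclidNorm (q0 - qinf)) := by
      intro j p
      have h := hpt (j:ℝ) (Nat.cast_nonneg j) p
      rw [Nat.floor_natCast] at h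
      have hqp : qinf p = 0 := congrFun h0 p
      rw [Pi.sub_apply, hqp, sub_zero] at h
      exact h
    have htend : Tendsto (fun j : ℕ => (exp ((-(j:ℝ)) • M)).mulVec q0)
        atTop (nhds 0) := by
      rw [tendsto_iff_norm_sub_tendsto_zero]
      apply squeeze_zero (fun j => norm_nonneg _)
        (g := fun j : ℕ => ρ ^ j * (2 * euclidNorm (q0 - qinf)))
      · intro j
        rw [sub_zero]
        rw [pi_norm_le_iff_of_nonneg (by positivity)]
        intro p
        rw [Real.norm_eq_abs]
        exact hseq j p
      · simpa using ((tendsto_pow_atTop_nhds_zero_of_lt_one hρ0.le hρ1).mul_const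
          (2 * euclidNorm (q0 - qinf)))
    have hmem : ∀ j : ℕ,
        q0 - (exp ((-(j:ℝ)) • M)).mulVec q0 ∈ LinearMap.range (Matrix.mulVecLin M) := by
      intro j
      obtain ⟨C, hC⟩ := exp_eq_one_add_mul ((-(j:ℝ)) • M)
      rw [hC, Matrix.add_mulVec, Matrix.one_mulVec]
      rw [show ((-(j:ℝ)) • M * C) = M * ((-(j:ℝ)) • C) from by
        rw [smul_mul_assoc, mul_smul_comm]]
      rw [← Matrix.mulVec_mulVec]
      refine ⟨-(((-(j:ℝ)) • C).mulVec q0), ?_⟩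
      rw [Matrix.mulVecLin_apply, Matrix.mulVec_neg]
      abel
    have htend2 : Tendsto (fun j : ℕ => q0 - (exp ((-(j:ℝ)) • M)).mulVec q0)
        atTop (nhds q0) := by
      have h := (tendsto_const_nhds (x := q0) (f := (atTop : Filter ℕ))).sub htend
      simpa using h
    have hcl := Submodule.closed_of_finiteDimensional (LinearMap.range (Matrix.mulVecLin M))
    obtain ⟨w, hw⟩ := hcl.mem_of_tendsto htend2 (Filter.Eventually.of_forall hmem)
    exact ⟨w, by rw [← Matrix.mulVecLin_apply]; exact hw⟩
  -- exponential rate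
  set lam : ℝ := -Real.log ρ with hlamdef
  have hlog : Real.log ρ < 0 := Real.log_neg hρ0 hρ1
  have hlam : 0 < lam := by rw [hlamdef]; linarith
  have hexpb : ∀ t : ℝ, 0 ≤ t → ρ ^ (⌊t⌋₊) ≤ ρ⁻¹ * Real.exp (-lam * t) := by
    intro t ht
    have h1 : ρ ^ (⌊t⌋₊) = ρ ^ ((⌊t⌋₊ : ℕ) : ℝ) := (Real.rpow_natCast _ _).symm
    have hfl : t - 1 ≤ ((⌊t⌋₊ : ℕ) : ℝ) := by
      have := Nat.lt_floor_add_one t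
      linarith
    have h2 : ρ ^ ((⌊t⌋₊ : ℕ) : ℝ) ≤ ρ ^ (t - 1 : ℝ) :=
      Real.rpow_le_rpow_of_exponent_ge hρ0 hρ1.le hfl
    have h3 : ρ ^ (t - 1 : ℝ) = ρ⁻¹ * Real.exp (-lam * t) := by
      rw [Real.rpow_def_of_pos hρ0]
      rw [show Real.log ρ * (t - 1) = (-lam * t) + lam from by rw [hlamdef]; ring]
      rw [Real.exp_add, hlamdef, Real.exp_neg, Real.exp_log hρ0]
      ring
    rw [h1, ← h3]
    exact h2
  have hcard : (0 : ℝ) < Real.sqrt (Fintype.card (Fin N × Fin n)) := by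
    apply Real.sqrt_pos.mpr
    exact_mod_cast Fintype.card_pos
  refine ⟨qinf, fun i j k => rfl, hne0,
    Real.sqrt (Fintype.card (Fin N × Fin n)) * (ρ⁻¹ * 2),
    by positivity, lam, hlam, ?_⟩
  intro t ht
  have hCnn : 0 ≤ ρ⁻¹ * Real.exp (-lam * t) * (2 * euclidNorm (q0 - qinf)) := by positivity
  have hC : ∀ p, |((exp ((-t) • (L ⊗ₖ (1 : Matrix (Fin n) (Fin n) ℝ)))).mulVec q0 - qinf) p|
      ≤ ρ⁻¹ * Real.exp (-lam * t) * (2 * euclidNorm (q0 - qinf)) := by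
    intro p
    refine le_trans (hpt t ht p) ?_
    exact mul_le_mul_of_nonneg_right (hexpb t ht) (by positivity)
  calc euclidNorm ((exp ((-t) • (L ⊗ₖ (1 : Matrix (Fin n) (Fin n) ℝ)))).mulVec q0 - qinf)
      ≤ Real.sqrt (Fintype.card (Fin N × Fin n))
          * (ρ⁻¹ * Real.exp (-lam * t) * (2 * euclidNorm (q0 - qinf))) := enorm_le _ hCnn hC
    _ = Real.sqrt (Fintype.card (Fin N × Fin n)) * (ρ⁻¹ * 2)
          * Real.exp (-lam * t) * euclidNorm (q0 - qinf) := by ring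

end Backward

end ConsensusProofAux

/-- for `q̇ = −(L ⊗ Iₙ) q` with solution `q(t) = exp(−t(L ⊗ Iₙ)) q(0)` on a
graph with a rooted-out branch, `q(t)` converges exponentially to a NONZERO point of the
consensus set iff `q(0)` is not in the column space of `L ⊗ Iₙ`. -/
theorem consensus_nonzero_limit_iff_not_in_column_space
    (N n : ℕ) (a : Fin N → Fin N → ℝ) (ha : ∀ i j, 0 ≤ a i j)
    (L : Matrix (Fin N) (Fin N) ℝ) (hL : L = graphLaplacian a)
    (hroot : hasRootedOutBranch a)
    (q0 : Fin N × Fin n → ℝ) :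
    (∃ qinf : Fin N × Fin n → ℝ,
        (∀ i j : Fin N, ∀ k : Fin n, qinf (i, k) = qinf (j, k)) ∧ qinf ≠ 0 ∧
        ∃ η > (0 : ℝ), ∃ lam > (0 : ℝ), ∀ t : ℝ, 0 ≤ t →
          euclidNorm ((NormedSpace.exp ((-t) • (L ⊗ₖ (1 : Matrix (Fin n) (Fin n) ℝ)))).mulVec q0
              - qinf)
            ≤ η * Real.exp (-lam * t) * euclidNorm (q0 - qinf))
    ↔ ¬ (∃ y : Fin N × Fin n → ℝ,
          (L ⊗ₖ (1 : Matrix (Fin n) (Fin n) ℝ)).mulVec y = q0) := by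
  subst hL
  rcases isEmpty_or_nonempty (Fin N × Fin n) with hemp | hne
  · constructor
    · rintro ⟨qinf, -, hne0, -⟩ -
      exact hne0 (funext fun p => (hemp.false p).elim)
    · intro h
      exact absurd ⟨0, funext fun p => (hemp.false p).elim⟩ h
  · have hN : Nonempty (Fin N) := ⟨(Classical.arbitrary (Fin N × Fin n)).1⟩
    have hn : Nonempty (Fin n) := ⟨(Classical.arbitrary (Fin N × Fin n)).2⟩
    obtain ⟨r, hr⟩ := hroot
    constructor
    · rintro ⟨qinf, hcons, hne0, η, hη, lam, hlam, hbound⟩ ⟨y, hy⟩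
      exact ConsensusProofAux.forward_main a ha q0 qinf hcons hne0 hη hlam hbound y hy
    · intro hnr
      exact ConsensusProofAux.backward_main a ha r hr q0 hnr
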